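/- Let Φ be a reduced crystallographic root system with base Δ of cardinality n, and let J ⊆ Δ be a subset of cardinality m such that no connected component of the Dynkin graph of Δ is entirely contained in J (here the Dynkin graph has vertex set Δ with an edge between distinct simple roots α, β iff the pairing ⟨α, β̌⟩ is nonzero). Then there exists an enumeration α_1, …, α_n of Δ such that: (1) J = {α_1, …, α_m}, and (2) for every i = 1, …, n, the root β_i = s_{α_n} s_{α_{n-1}} ⋯ s_{α_{i+1}}(α_i) does not belong to Φ_J, the set of roots of Φ lying in the linear span of J. -/

import Mathlib

/-!
STATEMENT 8: Let `Φ` be a reduced crystallographic root system with base `Δ` of cardinality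
`n`, and let `J ⊆ Δ` have cardinality `m`.  Assume that no connected component of the Dynkin
graph of `Δ` (vertices `Δ`, an edge between distinct `α, β` iff `⟨α, β̌⟩ ≠ 0`) is entirely
contained in `J`; equivalently, every vertex of `Δ` is connected (by a path in the Dynkin
graph, encoded below by the reflexive-transitive closure of the symmetrized adjacency
relation) to some vertex of `Δ \ J`.  Then there is an enumeration `α_1, …, α_n` of `Δ` such
that `J = {α_1, …, α_m}` and such that for every `i` the root
`β_i = s_{α_n} s_{α_{n-1}} ⋯ s_{α_{i+1}} (α_i)` does not lie in `Φ_J`, the set of roots of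
`Φ` lying in the linear span of `J`.

The root system is encoded by `ReducedCrystRootSystem`; the enumeration is a `0`-indexed
family `b 0, …, b (n-1)`, and `β_i` is `beta R b n i`.
-/

/-- A reduced crystallographic root system in a vector space `V` over `ℚ`. -/
structure ReducedCrystRootSystem (V : Type*) [AddCommGroup V] [Module ℚ V] where
  /-- The set of roots. -/
  roots : Set V
  /-- For a root `α`, the linear functional `⟨·, α̌⟩` given by pairing with the coroot. -/
  coroot : V → V →ₗ[ℚ] ℚ
  finite : roots.Finite
  zero_not_mem : (0 : V) ∉ roots
  span_eq_top : Submodule.span ℚ roots = ⊤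
  coroot_self : ∀ α ∈ roots, coroot α α = 2
  crystallographic : ∀ α ∈ roots, ∀ β ∈ roots, ∃ m : ℤ, coroot α β = (m : ℚ)
  reflect_mem : ∀ α ∈ roots, ∀ β ∈ roots, β - coroot α β • α ∈ roots
  reduced : ∀ α ∈ roots, ∀ t : ℚ, t • α ∈ roots → t = 1 ∨ t = -1

namespace ReducedCrystRootSystem

variable {V : Type*} [AddCommGroup V] [Module ℚ V]

/-- The reflection `s_α` in the root `α`. -/
def refl (R : ReducedCrystRootSystem V) (α x : V) : V := x - R.coroot α x • α

/-- `beta R b n i = s_{b (n-1)} ⋯ s_{b (i+2)} s_{b (i+1)} (b i)` (`0`-indexed version of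
`β_i = s_{α_n} ⋯ s_{α_{i+1}} (α_i)`): the reflections are applied starting from the one
of smallest index. -/
def beta (R : ReducedCrystRootSystem V) (b : ℕ → V) (n i : ℕ) : V :=
  (List.range' (i + 1) (n - (i + 1))).foldl (fun x j => R.refl (b j) x) (b i)

/-- The adjacency relation of the Dynkin graph of the base `Δ`:
`x` and `y` are distinct elements of `Δ` with `⟨x, y̌⟩ ≠ 0`. -/
def DynkinAdj (R : ReducedCrystRootSystem V) (Δ : Finset V) (x y : V) : Prop :=
  x ∈ Δ ∧ y ∈ Δ ∧ x ≠ y ∧ R.coroot y x ≠ 0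

end ReducedCrystRootSystem

section Aux

namespace ReducedCrystRootSystem

variable {V : Type*} [AddCommGroup V] [Module ℚ V]

/-- `Reach R Δ J t α`: there is a path of length at most `t` in the Dynkin graph from `α`
to a vertex of `Δ \ J`. -/
def Reach (R : ReducedCrystRootSystem V) (Δ J : Finset V) : ℕ → V → Prop
  | 0, α => α ∈ Δ ∧ α ∉ J
  | (t+1), α => Reach R Δ J t α ∨
      ∃ γ, (R.DynkinAdj Δ α γ ∨ R.DynkinAdj Δ γ α) ∧ Reach R Δ J t γ

/-- Distance from `α` to `Δ \ J` in the Dynkin graph. -/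
noncomputable def ddist (R : ReducedCrystRootSystem V) (Δ J : Finset V) (α : V) : ℕ :=
  sInf {t | Reach R Δ J t α}

theorem reach_of_rtg (R : ReducedCrystRootSystem V) (Δ J : Finset V) {α β : V}
    (hβΔ : β ∈ Δ) (hβJ : β ∉ J)
    (h : Relation.ReflTransGen
      (fun x y => R.DynkinAdj Δ x y ∨ R.DynkinAdj Δ y x) α β) :
    ∃ t, Reach R Δ J t α := by
  induction h using Relation.ReflTransGen.head_induction_on with
  | refl => exact ⟨0, hβΔ, hβJ⟩
  | head hadj _ ih =>
      obtain ⟨t, ht⟩ := ih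
      exact ⟨t + 1, Or.inr ⟨_, hadj, ht⟩⟩

theorem ddist_eq_zero (R : ReducedCrystRootSystem V) (Δ J : Finset V) {α : V}
    (h1 : α ∈ Δ) (h2 : α ∉ J) : ddist R Δ J α = 0 :=
  Nat.sInf_eq_zero.mpr (Or.inl ⟨h1, h2⟩)

theorem ddist_step (R : ReducedCrystRootSystem V) (Δ J : Finset V) {α : V}
    (hαJ : α ∈ J) (hex : ∃ t, Reach R Δ J t α) :
    ∃ γ ∈ Δ, (R.DynkinAdj Δ α γ ∨ R.DynkinAdj Δ γ α) ∧
      ddist R Δ J γ < ddist R Δ J α := by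
  have hmem : Reach R Δ J (ddist R Δ J α) α := Nat.sInf_mem hex
  rcases hd : ddist R Δ J α with _ | s
  · rw [hd] at hmem
    exact absurd hαJ hmem.2
  · rw [hd] at hmem
    rcases hmem with hr | ⟨γ, hadj, hr⟩
    · have : ddist R Δ J α ≤ s := Nat.sInf_le hr
      omega
    · have hγΔ : γ ∈ Δ := by
        rcases hadj with h | h
        · exact h.2.1
        · exact h.1
      have : ddist R Δ J γ ≤ s := Nat.sInf_le hr
      exact ⟨γ, hγΔ, hadj, by omega⟩

end ReducedCrystRootSystem

end Aux

theorem stmt8 {V : Type*} [AddCommGroup V] [Module ℚ V]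
    (R : ReducedCrystRootSystem V) (Δ J : Finset V) {n m : ℕ}
    (hΔcard : Δ.card = n) (hJcard : J.card = m) (hJΔ : J ⊆ Δ)
    -- `Δ` is a base of the root system:
    (hmem : ∀ α ∈ Δ, α ∈ R.roots)
    (hindep : LinearIndependent ℚ (fun α : (Δ : Set V) => (α : V)))
    (hcoords : ∀ β ∈ R.roots, ∃ c : V → ℤ,
      ((∀ α, 0 ≤ c α) ∨ (∀ α, c α ≤ 0)) ∧ β = ∑ α ∈ Δ, (c α : ℚ) • α)
    -- no connected component of the Dynkin graph of `Δ` is entirely contained in `J`: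
    (hconn : ∀ α ∈ Δ, ∃ β ∈ Δ, β ∉ J ∧
      Relation.ReflTransGen
        (fun x y => R.DynkinAdj Δ x y ∨ R.DynkinAdj Δ y x) α β) :
    ∃ b : ℕ → V,
      (∀ i < n, b i ∈ Δ) ∧
      (∀ i < n, ∀ j < n, b i = b j → i = j) ∧
      (∀ α ∈ Δ, ∃ i < n, b i = α) ∧
      (∀ i < n, (b i ∈ J ↔ i < m)) ∧
      (∀ i < n,
        ¬(R.beta b n i ∈ R.roots ∧
          R.beta b n i ∈ Submodule.span ℚ (J : Set V))) := by
  classical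
  -- abbreviation for the symmetrized adjacency and existence of a path to `Δ \ J`
  have hex : ∀ α ∈ Δ, ∃ t, ReducedCrystRootSystem.Reach R Δ J t α := by
    intro α hα
    obtain ⟨β, hβΔ, hβJ, hpath⟩ := hconn α hα
    exact ReducedCrystRootSystem.reach_of_rtg R Δ J hβΔ hβJ hpath
  -- the coordinate functionals
  have hindep' : LinearIndepOn ℚ id (Δ : Set V) := by exact hindep
  set B := Module.Basis.extend hindep' with hB
  have hsub : (Δ : Set V) ⊆ hindep'.extend (Set.subset_univ _) :=
    hindep'.subset_extend _
  set φ : V → V →ₗ[ℚ] ℚ := fun γ =>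
    if h : γ ∈ hindep'.extend (Set.subset_univ (Δ : Set V)) then B.coord ⟨γ, h⟩ else 0
    with hφdef
  have hφ : ∀ γ ∈ Δ, ∀ α ∈ Δ, φ γ α = if γ = α then 1 else 0 := by
    intro γ hγ α hα
    have hγ' : γ ∈ hindep'.extend (Set.subset_univ (Δ : Set V)) := hsub hγ
    have hα' : α ∈ hindep'.extend (Set.subset_univ (Δ : Set V)) := hsub hα
    rw [hφdef]
    simp only [dif_pos hγ']
    have hBα : B ⟨α, hα'⟩ = α := Module.Basis.extend_apply_self hindep' ⟨α, hα'⟩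
    rw [Module.Basis.coord_apply]
    nth_rewrite 1 [← hBα]
    rw [Module.Basis.repr_self_apply]
    by_cases h : γ = α
    · rw [if_pos h, if_pos (by exact Subtype.ext h.symm)]
    · rw [if_neg h, if_neg (fun hc => h (congrArg Subtype.val hc).symm)]
  have hφsum : ∀ γ ∈ Δ, ∀ c : V → ℚ, φ γ (∑ α ∈ Δ, c α • α) = c γ := by
    intro γ hγ c
    rw [map_sum]
    rw [Finset.sum_eq_single_of_mem γ hγ]
    · rw [map_smul, hφ γ hγ γ hγ, if_pos rfl, smul_eq_mul, mul_one]
    · intro α hα hne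
      rw [map_smul, hφ γ hγ α hα, if_neg (Ne.symm hne), smul_eq_mul, mul_zero]
  have hexpand : ∀ ρ ∈ R.roots, ρ = ∑ α ∈ Δ, φ α ρ • α := by
    intro ρ hρ
    obtain ⟨c, _, hc⟩ := hcoords ρ hρ
    conv_lhs => rw [hc]
    rw [hc]
    refine Finset.sum_congr rfl fun α hα => ?_
    rw [hφsum α hα]
  have hsign : ∀ ρ ∈ R.roots, (∀ γ ∈ Δ, 0 ≤ φ γ ρ) ∨ (∀ γ ∈ Δ, φ γ ρ ≤ 0) := by
    intro ρ hρ
    obtain ⟨c, hs, hc⟩ := hcoords ρ hρ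
    have hval : ∀ γ ∈ Δ, φ γ ρ = (c γ : ℚ) := by
      intro γ hγ
      rw [hc, hφsum γ hγ]
    rcases hs with h | h
    · left; intro γ hγ; rw [hval γ hγ]; exact_mod_cast h γ
    · right; intro γ hγ; rw [hval γ hγ]; exact_mod_cast h γ
  have hφJ : ∀ γ ∈ Δ, γ ∉ J → ∀ x ∈ Submodule.span ℚ (J : Set V), φ γ x = 0 := by
    intro γ hγ hγJ x hx
    have hker : (J : Set V) ⊆ (LinearMap.ker (φ γ) : Set V) := by
      intro α hα
      have hαJ : α ∈ J := hα
      have : φ γ α = 0 := by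
        rw [hφ γ hγ α (hJΔ hαJ), if_neg]
        intro h; subst h; exact hγJ hαJ
      simpa [LinearMap.mem_ker] using this
    have := Submodule.span_le.mpr hker hx
    simpa [LinearMap.mem_ker] using this
  -- nonpositivity of off-diagonal pairings
  have hpair_nonpos : ∀ α ∈ Δ, ∀ γ ∈ Δ, γ ≠ α → R.coroot α γ ≤ 0 := by
    intro α hα γ hγ hne
    by_contra hpos
    push_neg at hpos
    set ρ := γ - R.coroot α γ • α with hρdef
    have hρ : ρ ∈ R.roots := R.reflect_mem α (hmem α hα) γ (hmem γ hγ)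
    have h1 : φ γ ρ = 1 := by
      rw [hρdef, map_sub, map_smul, hφ γ hγ γ hγ, if_pos rfl,
        hφ γ hγ α hα, if_neg hne]
      simp
    have h2 : φ α ρ = -R.coroot α γ := by
      rw [hρdef, map_sub, map_smul, hφ α hα γ hγ, if_neg (Ne.symm hne),
        hφ α hα α hα, if_pos rfl]
      simp
    rcases hsign ρ hρ with h | h
    · have := h α hα; rw [h2] at this; linarith
    · have := h γ hγ; rw [h1] at this; linarith
  have hpair_symm : ∀ α ∈ Δ, ∀ γ ∈ Δ, γ ≠ α →
      R.coroot γ α = 0 → R.coroot α γ = 0 := by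
    intro α hα γ hγ hne h0
    by_contra hne0
    have hc : R.coroot α γ < 0 := lt_of_le_of_ne (hpair_nonpos α hα γ hγ hne) hne0
    set ρ₁ := γ - R.coroot α γ • α with hρ₁def
    have hρ₁ : ρ₁ ∈ R.roots := R.reflect_mem α (hmem α hα) γ (hmem γ hγ)
    have hcor : R.coroot γ ρ₁ = 2 := by
      rw [hρ₁def, map_sub, map_smul, R.coroot_self γ (hmem γ hγ), h0]
      simp
    set ρ₂ := ρ₁ - R.coroot γ ρ₁ • γ with hρ₂def
    have hρ₂ : ρ₂ ∈ R.roots := R.reflect_mem γ (hmem γ hγ) ρ₁ hρ₁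
    have h1 : φ γ ρ₂ = -1 := by
      rw [hρ₂def, hcor, hρ₁def, map_sub, map_sub, map_smul, map_smul,
        hφ γ hγ γ hγ, if_pos rfl, hφ γ hγ α hα, if_neg hne]
      norm_num
    have h2 : φ α ρ₂ = -R.coroot α γ := by
      rw [hρ₂def, hcor, hρ₁def, map_sub, map_sub, map_smul, map_smul,
        hφ α hα γ hγ, if_neg (Ne.symm hne), hφ α hα α hα, if_pos rfl]
      norm_num
    rcases hsign ρ₂ hρ₂ with h | h
    · have := h γ hγ; rw [h1] at this; linarith
    · have := h α hα; rw [h2] at this; linarith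
  -- build the enumeration
  have hmn : m ≤ n := by
    rw [← hΔcard, ← hJcard]; exact Finset.card_le_card hJΔ
  set r : V → V → Prop := fun x y =>
    ReducedCrystRootSystem.ddist R Δ J y ≤ ReducedCrystRootSystem.ddist R Δ J x with hr
  haveI : IsTotal V r := ⟨fun a b => (le_total _ _).symm⟩
  haveI : IsTrans V r := ⟨fun a b c hab hbc => le_trans hbc hab⟩
  set LJ := List.insertionSort r J.toList with hLJ
  set LK := (Δ \ J).toList with hLK
  set L := LJ ++ LK with hL
  have hLJperm : List.Perm LJ J.toList := List.perm_insertionSort r J.toList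
  have hLJmem : ∀ x, x ∈ LJ ↔ x ∈ J := by
    intro x; rw [hLJperm.mem_iff, Finset.mem_toList]
  have hLKmem : ∀ x, x ∈ LK ↔ x ∈ Δ ∧ x ∉ J := by
    intro x; rw [hLK, Finset.mem_toList, Finset.mem_sdiff]
  have hLJlen : LJ.length = m := by
    rw [hLJperm.length_eq, Finset.length_toList, hJcard]
  have hLKlen : LK.length = n - m := by
    rw [hLK, Finset.length_toList, Finset.card_sdiff_of_subset hJΔ, hΔcard, hJcard]
  have hLlen : L.length = n := by
    rw [hL, List.length_append, hLJlen, hLKlen]; omega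
  have hLnodup : L.Nodup := by
    rw [hL, List.nodup_append]
    refine ⟨hLJperm.nodup_iff.mpr J.nodup_toList, (Δ \ J).nodup_toList, ?_⟩
    intro x hx y hx' hxy
    subst hxy
    exact ((hLKmem x).mp hx').2 ((hLJmem x).mp hx)
  have hLsorted : L.Pairwise r := by
    rw [hL]
    refine List.pairwise_append.mpr ⟨List.pairwise_insertionSort r J.toList, ?_, ?_⟩
    · refine List.pairwise_of_forall_mem_list ?_
      intro a ha c hc
      have hc' := (hLKmem c).mp hc
      show ReducedCrystRootSystem.ddist R Δ J c ≤ ReducedCrystRootSystem.ddist R Δ J a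
      rw [ReducedCrystRootSystem.ddist_eq_zero R Δ J hc'.1 hc'.2]
      exact Nat.zero_le _
    · intro a ha c hc
      have hc' := (hLKmem c).mp hc
      show ReducedCrystRootSystem.ddist R Δ J c ≤ ReducedCrystRootSystem.ddist R Δ J a
      rw [ReducedCrystRootSystem.ddist_eq_zero R Δ J hc'.1 hc'.2]
      exact Nat.zero_le _
  refine ⟨fun i => L.getD i 0, ?_⟩
  set b : ℕ → V := fun i => L.getD i 0 with hbdef
  have hbget : ∀ i (h : i < n), b i = L.get ⟨i, by rw [hLlen]; exact h⟩ := by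
    intro i h
    rw [hbdef]
    simp only [List.getD_eq_getElem?_getD, List.getElem?_eq_getElem
      (show i < L.length by rw [hLlen]; exact h), Option.getD_some]
    rfl
  have hbmemL : ∀ i, i < n → b i ∈ L := by
    intro i h; rw [hbget i h]; exact List.get_mem _ _
  have hbΔ : ∀ i < n, b i ∈ Δ := by
    intro i h
    have := hbmemL i h
    rw [hL, List.mem_append] at this
    rcases this with h' | h'
    · exact hJΔ ((hLJmem _).mp h')
    · exact ((hLKmem _).mp h').1
  have hbinj : ∀ i < n, ∀ j < n, b i = b j → i = j := by
    intro i hi j hj hij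
    rw [hbget i hi, hbget j hj] at hij
    have := (List.Nodup.get_inj_iff hLnodup).mp hij
    exact congrArg Fin.val this
  have hbsurj : ∀ α ∈ Δ, ∃ i < n, b i = α := by
    intro α hα
    have hαL : α ∈ L := by
      rw [hL, List.mem_append]
      by_cases h : α ∈ J
      · exact Or.inl ((hLJmem α).mpr h)
      · exact Or.inr ((hLKmem α).mpr ⟨hα, h⟩)
    obtain ⟨k, hk, hkα⟩ := List.mem_iff_getElem.mp hαL
    refine ⟨k, by rw [hLlen] at hk; exact hk, ?_⟩
    rw [hbget k (by rw [hLlen] at hk; exact hk)]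
    exact hkα
  have hbJ : ∀ i < n, (b i ∈ J ↔ i < m) := by
    intro i hi
    have hiL : i < L.length := by rw [hLlen]; exact hi
    constructor
    · intro hbi
      by_contra him
      push_neg at him
      have : b i = LK[i - LJ.length]'(by rw [hLKlen, hLJlen]; omega) := by
        rw [hbget i hi]
        exact List.getElem_append_right (by rw [hLJlen]; omega)
      have hmem' : b i ∈ LK := this ▸ List.getElem_mem _
      exact ((hLKmem _).mp hmem').2 hbi
    · intro him
      have : b i = LJ[i]'(by rw [hLJlen]; omega) := by
        rw [hbget i hi]
        exact List.getElem_append_left (by rw [hLJlen]; omega)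
      have hmem' : b i ∈ LJ := this ▸ List.getElem_mem _
      exact (hLJmem _).mp hmem'
  have hbsort : ∀ i < n, ∀ k < n,
      ReducedCrystRootSystem.ddist R Δ J (b k) <
        ReducedCrystRootSystem.ddist R Δ J (b i) → i < k := by
    intro i hi k hk hlt
    by_contra hle
    push_neg at hle
    rcases lt_or_eq_of_le hle with h | h
    · have := hLsorted.rel_get_of_lt
        (a := ⟨k, by rw [hLlen]; exact hk⟩) (b := ⟨i, by rw [hLlen]; exact hi⟩) h
      rw [← hbget k hk, ← hbget i hi] at this
      rw [hr] at this
      omega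
    · subst h; omega
  refine ⟨hbΔ, hbinj, hbsurj, hbJ, ?_⟩
  -- the main argument
  intro i hi
  rintro ⟨hβroot, hβspan⟩
  set Z : ℕ → V := fun t =>
    (List.range' (i + 1) t).foldl (fun x j => R.refl (b j) x) (b i) with hZ
  have hZ0 : Z 0 = b i := rfl
  have hZsucc : ∀ t, Z (t + 1) = R.refl (b (i + 1 + t)) (Z t) := by
    intro t
    rw [hZ]
    simp only [List.range'_1_concat, List.foldl_append, List.foldl_cons, List.foldl_nil]
  have hbeta : R.beta b n i = Z (n - (i + 1)) := rfl
  have hφrefl : ∀ γ α x, φ γ (R.refl α x) = φ γ x - R.coroot α x * φ γ α := by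
    intro γ α x
    rw [ReducedCrystRootSystem.refl, map_sub, map_smul, smul_eq_mul]
  have hZroot : ∀ t, t ≤ n - (i + 1) → Z t ∈ R.roots := by
    intro t
    induction t with
    | zero => intro _; rw [hZ0]; exact hmem _ (hbΔ i hi)
    | succ t ih =>
        intro ht
        have hidx : i + 1 + t < n := by omega
        have := R.reflect_mem (b (i + 1 + t)) (hmem _ (hbΔ _ hidx)) (Z t) (ih (by omega))
        rw [hZsucc t]
        exact this
  have hfrozen : ∀ k, k < n → ∀ t t', t ≤ t' → t' ≤ n - (i + 1) → k ≤ i + t →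
      φ (b k) (Z t') = φ (b k) (Z t) := by
    intro k hk t t' htt' ht' hki
    induction t', htt' using Nat.le_induction with
    | base => rfl
    | succ t' htt' ih =>
        have hidx : i + 1 + t' < n := by omega
        have hne : b k ≠ b (i + 1 + t') := by
          intro h
          have := hbinj k hk (i + 1 + t') hidx h
          omega
        rw [hZsucc t', hφrefl, hφ (b k) (hbΔ k hk) (b (i + 1 + t')) (hbΔ _ hidx),
          if_neg hne, mul_zero, sub_zero]
        exact ih (by omega)
  have hZi : ∀ t, t ≤ n - (i + 1) → φ (b i) (Z t) = 1 := by
    intro t ht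
    rw [hfrozen i hi 0 t (Nat.zero_le _) ht (by omega), hZ0,
      hφ (b i) (hbΔ i hi) (b i) (hbΔ i hi), if_pos rfl]
  have hZnonneg : ∀ t, t ≤ n - (i + 1) → ∀ γ ∈ Δ, 0 ≤ φ γ (Z t) := by
    intro t ht γ hγ
    rcases hsign (Z t) (hZroot t ht) with h | h
    · exact h γ hγ
    · have := h (b i) (hbΔ i hi)
      rw [hZi t ht] at this
      linarith
  have hZuntouched : ∀ t, t ≤ n - (i + 1) → ∀ k, k < n → i + t < k →
      φ (b k) (Z t) = 0 := by
    intro t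
    induction t with
    | zero =>
        intro _ k hk hik
        rw [hZ0, hφ (b k) (hbΔ k hk) (b i) (hbΔ i hi), if_neg]
        intro h
        have := hbinj k hk i hi h
        omega
    | succ t ih =>
        intro ht k hk hik
        have hidx : i + 1 + t < n := by omega
        have hne : b k ≠ b (i + 1 + t) := by
          intro h
          have := hbinj k hk (i + 1 + t) hidx h
          omega
        rw [hZsucc t, hφrefl, hφ (b k) (hbΔ k hk) (b (i + 1 + t)) (hbΔ _ hidx),
          if_neg hne, mul_zero, sub_zero]
        exact ih (by omega) k hk (by omega)
  have hkeystep : ∀ j k, i ≤ j → j < k → k < n →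
      (R.DynkinAdj Δ (b j) (b k) ∨ R.DynkinAdj Δ (b k) (b j)) →
      0 < φ (b j) (Z (j - i)) → 0 < φ (b k) (Z (k - i)) := by
    intro j k hij hjk hkn hadj hpos
    have hjn : j < n := lt_trans hjk hkn
    have hbjΔ := hbΔ j hjn
    have hbkΔ := hbΔ k hkn
    set W := Z (k - i - 1) with hWdef
    have hidx : i + 1 + (k - i - 1) = k := by omega
    have hW : Z (k - i) = R.refl (b k) W := by
      have h1 : k - i = (k - i - 1) + 1 := by omega
      rw [h1, hZsucc, hidx]
    have hWroot : W ∈ R.roots := hZroot _ (by omega)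
    have hWk0 : φ (b k) W = 0 := hZuntouched _ (by omega) k hkn (by omega)
    have hφval : φ (b k) (Z (k - i)) = -R.coroot (b k) W := by
      rw [hW, hφrefl, hWk0, hφ (b k) hbkΔ (b k) hbkΔ, if_pos rfl, mul_one, zero_sub]
    have hbjW : 0 < φ (b j) W := by
      have := hfrozen j hjn (j - i) (k - i - 1) (by omega) (by omega) (by omega)
      rw [hWdef]
      rw [this]
      exact hpos
    have hne : b j ≠ b k := by
      intro h
      have := hbinj j hjn k hkn h
      omega
    have hcjk : R.coroot (b k) (b j) < 0 := by
      have hle := hpair_nonpos (b k) hbkΔ (b j) hbjΔ hne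
      have hne0 : R.coroot (b k) (b j) ≠ 0 := by
        rcases hadj with h | h
        · exact h.2.2.2
        · intro h0
          exact h.2.2.2 (hpair_symm (b j) hbjΔ (b k) hbkΔ (Ne.symm hne) h0)
      exact lt_of_le_of_ne hle hne0
    have hsum : R.coroot (b k) W = ∑ γ ∈ Δ, φ γ W * R.coroot (b k) γ := by
      conv_lhs => rw [hexpand W hWroot]
      rw [map_sum]
      refine Finset.sum_congr rfl fun γ _ => ?_
      rw [map_smul, smul_eq_mul]
    have hneg : R.coroot (b k) W < 0 := by
      rw [hsum, ← Finset.sum_erase_add Δ _ hbjΔ]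
      have h1 : ∑ γ ∈ Δ.erase (b j), φ γ W * R.coroot (b k) γ ≤ 0 := by
        refine Finset.sum_nonpos fun γ hγ => ?_
        have hγΔ : γ ∈ Δ := Finset.mem_of_mem_erase hγ
        by_cases hγk : γ = b k
        · subst hγk
          rw [hWk0, zero_mul]
        · exact mul_nonpos_of_nonneg_of_nonpos (hZnonneg _ (by omega) γ hγΔ)
            (hpair_nonpos (b k) hbkΔ γ hγΔ hγk)
      have h2 : φ (b j) W * R.coroot (b k) (b j) < 0 :=
        mul_neg_of_pos_of_neg hbjW hcjk
      linarith
    rw [hφval]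
    linarith
  have hchain : ∀ D j, ReducedCrystRootSystem.ddist R Δ J (b j) ≤ D → i ≤ j → j < n →
      0 < φ (b j) (Z (j - i)) →
      ∃ k, i ≤ k ∧ k < n ∧ b k ∉ J ∧ 0 < φ (b k) (Z (k - i)) := by
    intro D
    induction D with
    | zero =>
        intro j hD hij hjn hpos
        by_cases hbJ' : b j ∈ J
        · obtain ⟨γ, hγΔ, hadj, hlt⟩ :=
            ReducedCrystRootSystem.ddist_step R Δ J hbJ' (hex (b j) (hbΔ j hjn))
          omega
        · exact ⟨j, hij, hjn, hbJ', hpos⟩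
    | succ D ih =>
        intro j hD hij hjn hpos
        by_cases hbJ' : b j ∈ J
        · obtain ⟨γ, hγΔ, hadj, hlt⟩ :=
            ReducedCrystRootSystem.ddist_step R Δ J hbJ' (hex (b j) (hbΔ j hjn))
          obtain ⟨k, hkn, hbk⟩ := hbsurj γ hγΔ
          subst hbk
          have hjk : j < k := hbsort j hjn k hkn hlt
          exact ih k (by omega) (by omega) hkn
            (hkeystep j k hij hjk hkn hadj hpos)
        · exact ⟨j, hij, hjn, hbJ', hpos⟩
  have hstart : 0 < φ (b i) (Z (i - i)) := by
    rw [Nat.sub_self, hZ0, hφ (b i) (hbΔ i hi) (b i) (hbΔ i hi), if_pos rfl]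
    norm_num
  obtain ⟨k, hik, hkn, hkJ, hkpos⟩ :=
    hchain (ReducedCrystRootSystem.ddist R Δ J (b i)) i le_rfl le_rfl hi hstart
  have hfinal : φ (b k) (R.beta b n i) = φ (b k) (Z (k - i)) := by
    rw [hbeta]
    exact hfrozen k hkn (k - i) (n - (i + 1)) (by omega) le_rfl (by omega)
  have h0 : φ (b k) (R.beta b n i) = 0 :=
    hφJ (b k) (hbΔ k hkn) hkJ _ hβspan
  rw [hfinal] at h0
  linarith
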